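/- Let G be a finite group, R a subgroup of G, and H a subgroup of G such that H is R-conjugate-permutable and R·H = H·R (as subsets of G). Then H is a subnormal subgroup of the subgroup H·R. -/

import Mathlib

open scoped Pointwise

section Defs

variable {G : Type*} [Group G]

/-- The conjugate `H^x = x⁻¹ H x` of a subgroup `H` of `G`. -/
def conjS (x : G) (H : Subgroup G) : Subgroup G :=
  H.map (MulAut.conj x⁻¹).toMonoidHom

/-- A subgroup `H` of `G` is `R`-conjugate-permutable (for a subset `R ⊆ G`) if
`H · H^x = H^x · H` as subsets of `G`, for all `x ∈ R`. -/
def IsRCP (R : Set G) (H : Subgroup G) : Prop :=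
  ∀ x ∈ R, (H : Set G) * (conjS x H : Set G) = (conjS x H : Set G) * (H : Set G)

/-- A subgroup `H` of `G` is conjugate-permutable if `H · H^x = H^x · H` for all `x ∈ G`. -/
def IsConjPermutable (H : Subgroup G) : Prop :=
  IsRCP (Set.univ : Set G) H

/-- `N` is a minimal normal subgroup of `G`. -/
def IsMinimalNormal (N : Subgroup G) : Prop :=
  N.Normal ∧ N ≠ ⊥ ∧ ∀ K : Subgroup G, K.Normal → K ≤ N → K = ⊥ ∨ K = N

/-- `H` is an abnormal subgroup of `G`: `x ∈ ⟨H, H^x⟩` for all `x ∈ G`. -/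
def IsAbnormal (H : Subgroup G) : Prop :=
  ∀ x : G, x ∈ H ⊔ conjS x H

/-- `H` is normal in the subgroup `K` of `G`. -/
def IsNormalIn (H K : Subgroup G) : Prop :=
  H ≤ K ∧ ∀ x ∈ K, ∀ h ∈ H, x * h * x⁻¹ ∈ H

/-- `H` is subnormal in the subgroup `K`: there is a chain
`H = H₀ ◁ H₁ ◁ ⋯ ◁ Hₙ = K` with each term normal in the next. -/
def IsSubnormalIn (H K : Subgroup G) : Prop :=
  ∃ (n : ℕ) (s : Fin (n + 1) → Subgroup G),
    s 0 = H ∧ s (Fin.last n) = K ∧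
    ∀ i : Fin n, s i.castSucc ≤ s i.succ ∧
      ∀ x ∈ s i.succ, ∀ h ∈ s i.castSucc, x * h * x⁻¹ ∈ s i.castSucc

/-- `H` is pronormal in the subgroup `K`: for every `x ∈ K`, the subgroups `H` and `H^x`
are conjugate in `⟨H, H^x⟩`. -/
def IsPronormalIn (H K : Subgroup G) : Prop :=
  H ≤ K ∧ ∀ x ∈ K, ∃ k ∈ H ⊔ conjS x H, conjS k H = conjS x H

end Defs

/-- The socle of `G`: the subgroup generated by all minimal normal subgroups of `G`. -/
def socle' (G : Type*) [Group G] : Subgroup G :=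
  sSup {N : Subgroup G | IsMinimalNormal N}

/-- `F̃(G)`: the subgroup of `G` containing the Frattini subgroup `Φ(G)` with
`F̃(G)/Φ(G) = Soc(G/Φ(G))`. -/
def Ftilde (G : Type*) [Group G] : Subgroup G :=
  (socle' (G ⧸ frattini G)).comap (QuotientGroup.mk' (frattini G))

/-- The Fitting subgroup `F(G)`: the largest normal nilpotent subgroup of `G`
(the subgroup generated by all normal nilpotent subgroups). -/
def Fitting (G : Type*) [Group G] : Subgroup G :=
  sSup {N : Subgroup G | N.Normal ∧ Group.IsNilpotent N}

section FittingNormal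

variable {G : Type*} [Group G]

lemma map_conj_eq_self {N : Subgroup G} (hN : N.Normal) (g : G) :
    N.map (MulAut.conj g).toMonoidHom = N := by
  ext x
  simp only [Subgroup.mem_map, MulEquiv.coe_toMonoidHom, MulAut.conj_apply]
  constructor
  · rintro ⟨n, hn, rfl⟩; exact hN.conj_mem n hn g
  · intro hx
    refine ⟨g⁻¹ * x * g, by simpa using hN.conj_mem x hx g⁻¹, by group⟩

instance Fitting_normal (G : Type*) [Group G] : (Fitting G).Normal := by
  constructor
  intro n hn g
  have h1 : (Fitting G).map (MulAut.conj g).toMonoidHom = Fitting G := by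
    unfold Fitting
    rw [sSup_eq_iSup, Subgroup.map_iSup]
    refine iSup_congr fun N => ?_
    rw [Subgroup.map_iSup]
    exact iSup_congr_Prop Iff.rfl fun hN => map_conj_eq_self hN.1 g
  rw [← h1]
  exact Subgroup.mem_map.2 ⟨n, hn, rfl⟩

end FittingNormal

/-- The generalized Fitting subgroup `F*(G)`: the subgroup containing `F(G)` with
`F*(G)/F(G) = Soc(C_G(F(G))·F(G)/F(G))`. -/
def FStar (G : Type*) [Group G] : Subgroup G :=
  Subgroup.comap (QuotientGroup.mk' (Fitting G))
    (Subgroup.map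
      ((Subgroup.centralizer (Fitting G : Set G) ⊔ Fitting G).map
          (QuotientGroup.mk' (Fitting G))).subtype
      (socle' ((Subgroup.centralizer (Fitting G : Set G) ⊔ Fitting G).map
          (QuotientGroup.mk' (Fitting G)))))

/-- A group is supersoluble if it has a normal series all of whose terms are
normal in the whole group and all of whose factors are cyclic; the factor
`s (i+1) / s i` being cyclic is expressed by `s (i+1) ≤ s i ⊔ ⟨g⟩` for some `g`. -/
def IsSupersoluble (G : Type*) [Group G] : Prop :=
  ∃ (n : ℕ) (s : Fin (n + 1) → Subgroup G),
    Monotone s ∧ s 0 = ⊥ ∧ s (Fin.last n) = ⊤ ∧ (∀ i, (s i).Normal) ∧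
    ∀ i : Fin n, ∃ g : G, s i.succ ≤ s i.castSucc ⊔ Subgroup.zpowers g

/-- A group is metanilpotent if it has a normal nilpotent subgroup with
nilpotent quotient. -/
def IsMetanilpotent (G : Type*) [Group G] : Prop :=
  ∃ (N : Subgroup G) (hN : N.Normal),
    Group.IsNilpotent N ∧
      @Group.IsNilpotent (G ⧸ N) (@QuotientGroup.Quotient.group G _ N hN)

section Work

variable {G : Type*} [Group G]

lemma mem_conjS {x a : G} {H : Subgroup G} : a ∈ conjS x H ↔ x * a * x⁻¹ ∈ H := by
  simp only [conjS, Subgroup.mem_map, MulEquiv.coe_toMonoidHom, MulAut.conj_apply]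
  constructor
  · rintro ⟨h, hh, rfl⟩
    simpa [mul_assoc] using hh
  · intro h
    exact ⟨x * a * x⁻¹, h, by group⟩

lemma conjS_conjS (x y : G) (H : Subgroup G) : conjS y (conjS x H) = conjS (x * y) H := by
  ext a
  simp only [mem_conjS, mul_inv_rev, mul_assoc]

lemma conjS_one (H : Subgroup G) : conjS 1 H = H := by
  ext a; simp [mem_conjS]

lemma conjS_of_mem {x : G} {H : Subgroup G} (hx : x ∈ H) : conjS x H = H := by
  ext a
  rw [mem_conjS]
  constructor
  · intro h
    have := H.mul_mem (H.mul_mem (H.inv_mem hx) h) hx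
    simpa [mul_assoc] using this
  · intro h
    exact H.mul_mem (H.mul_mem hx h) (H.inv_mem hx)

lemma conjS_le {x : G} {H K : Subgroup G} (hH : H ≤ K) (hx : x ∈ K) : conjS x H ≤ K := by
  intro a ha
  rw [mem_conjS] at ha
  have := K.mul_mem (K.mul_mem (K.inv_mem hx) (hH ha)) hx
  simpa [mul_assoc] using this

lemma coe_conjS (x : G) (H : Subgroup G) :
    (conjS x H : Set G) = (MulAut.conj x⁻¹).toMonoidHom '' (H : Set G) := by
  rfl

lemma image_conjS (k x : G) (H : Subgroup G) :
    (MulAut.conj k⁻¹).toMonoidHom '' (conjS x H : Set G) = (conjS (x * k) H : Set G) := by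
  rw [← conjS_conjS]; rfl

lemma mem_mul_self {x : G} {H : Subgroup G} (hx : x ∈ H) :
    x ∈ (H : Set G) * (H : Set G) := ⟨x, hx, 1, H.one_mem, by simp⟩

end Work

section Prod

variable {G : Type*} [Group G] {K H : Subgroup G}

/-- product of a list of conjugates of `H` -/
def Pl (H : Subgroup G) (l : List G) : Set G :=
  (l.map fun x => (conjS x H : Set G)).prod

lemma Pl_nil : Pl H ([] : List G) = 1 := rfl

lemma Pl_cons (a : G) (l : List G) : Pl H (a :: l) = (conjS a H : Set G) * Pl H l := by
  simp [Pl]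

lemma Pl_append (l m : List G) : Pl H (l ++ m) = Pl H l * Pl H m := by
  simp [Pl]

variable (hHK : H ≤ K)
  (hcp : ∀ x ∈ K, (H : Set G) * (conjS x H : Set G) = (conjS x H : Set G) * (H : Set G))

include hcp in
lemma CC_comm {x y : G} (hx : x ∈ K) (hy : y ∈ K) :
    (conjS x H : Set G) * (conjS y H : Set G) = (conjS y H : Set G) * (conjS x H : Set G) := by
  have hk : y * x⁻¹ ∈ K := K.mul_mem hy (K.inv_mem hx)
  have h0 := hcp _ hk
  have h1 := congrArg (fun s => (MulAut.conj x⁻¹).toMonoidHom '' s) h0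
  simp only [Set.image_mul] at h1
  rw [image_conjS, ← coe_conjS] at h1
  have hyx : y * x⁻¹ * x = y := by group
  rwa [hyx] at h1

include hcp in
lemma Pl_comm_single {l : List G} (hl : ∀ x ∈ l, x ∈ K) {y : G} (hy : y ∈ K) :
    Pl H l * (conjS y H : Set G) = (conjS y H : Set G) * Pl H l := by
  induction l with
  | nil => simp [Pl_nil]
  | cons a t ih =>
    have ha : a ∈ K := hl a (by simp)
    have ht : ∀ x ∈ t, x ∈ K := fun x hx => hl x (by simp [hx])
    rw [Pl_cons, mul_assoc, ih ht, ← mul_assoc, CC_comm hcp ha hy, mul_assoc]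

include hcp in
lemma Pl_comm {l m : List G} (hl : ∀ x ∈ l, x ∈ K) (hm : ∀ x ∈ m, x ∈ K) :
    Pl H l * Pl H m = Pl H m * Pl H l := by
  induction m with
  | nil => simp [Pl_nil]
  | cons a t ih =>
    have ha : a ∈ K := hm a (by simp)
    have ht : ∀ x ∈ t, x ∈ K := fun x hx => hm x (by simp [hx])
    rw [Pl_cons, ← mul_assoc, Pl_comm_single hcp hl ha, mul_assoc, ih ht, ← mul_assoc]

include hcp in
lemma Pl_sq {l : List G} (hl : ∀ x ∈ l, x ∈ K) : Pl H l * Pl H l = Pl H l := by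
  induction l with
  | nil => simp [Pl_nil]
  | cons a t ih =>
    have ha : a ∈ K := hl a (by simp)
    have ht : ∀ x ∈ t, x ∈ K := fun x hx => hl x (by simp [hx])
    rw [Pl_cons, mul_assoc, ← mul_assoc (Pl H t), Pl_comm_single hcp ht ha, mul_assoc,
      ih ht, ← mul_assoc, coe_mul_coe]

lemma one_mem_Pl (l : List G) : (1 : G) ∈ Pl H l := by
  induction l with
  | nil => exact Set.mem_one.2 rfl
  | cons a t ih =>
    rw [Pl_cons, ← mul_one (1 : G)]
    exact Set.mul_mem_mul (conjS a H).one_mem ih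

include hcp in
lemma Pl_inv {l : List G} (hl : ∀ x ∈ l, x ∈ K) : (Pl H l)⁻¹ = Pl H l := by
  induction l with
  | nil => simp [Pl_nil]
  | cons a t ih =>
    have ha : a ∈ K := hl a (by simp)
    have ht : ∀ x ∈ t, x ∈ K := fun x hx => hl x (by simp [hx])
    rw [Pl_cons, mul_inv_rev, ih ht, inv_coe_set, Pl_comm_single hcp ht ha]

include hHK in
lemma Pl_subset {l : List G} (hl : ∀ x ∈ l, x ∈ K) : Pl H l ⊆ (K : Set G) := by
  induction l with
  | nil =>
    intro a ha
    rw [Pl_nil, Set.mem_one] at ha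
    simp [ha, K.one_mem]
  | cons a t ih =>
    have ha : a ∈ K := hl a (by simp)
    have ht : ∀ x ∈ t, x ∈ K := fun x hx => hl x (by simp [hx])
    rw [Pl_cons]
    rintro z ⟨u, hu, v, hv, rfl⟩
    exact K.mul_mem (conjS_le hHK ha hu) (ih ht hv)

/-- the subgroup whose carrier is `Pl H l` -/
def PlSub (hHK : H ≤ K)
    (hcp : ∀ x ∈ K, (H : Set G) * (conjS x H : Set G) = (conjS x H : Set G) * (H : Set G))
    (l : List G) (hl : ∀ x ∈ l, x ∈ K) : Subgroup G where
  carrier := Pl H l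
  one_mem' := one_mem_Pl l
  mul_mem' := fun {a b} ha hb => by
    have : a * b ∈ Pl H l * Pl H l := Set.mul_mem_mul ha hb
    rwa [Pl_sq hcp hl] at this
  inv_mem' := fun {a} ha => by
    show a⁻¹ ∈ Pl H l
    have h2 : a⁻¹ ∈ (Pl H l)⁻¹ := Set.inv_mem_inv.2 ha
    rwa [Pl_inv hcp hl] at h2

@[simp] lemma coe_PlSub (l : List G) (hl : ∀ x ∈ l, x ∈ K) :
    (PlSub hHK hcp l hl : Set G) = Pl H l := rfl

include hcp in
lemma image_Pl (k : G) {l : List G} :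
    (MulAut.conj k⁻¹).toMonoidHom '' Pl H l = Pl H (l.map (· * k)) := by
  induction l with
  | nil => simp [Pl_nil, Set.image_one]; rfl
  | cons a t ih =>
    rw [Pl_cons, Set.image_mul, ih, image_conjS, List.map_cons, Pl_cons]

end Prod

section Key

variable {G : Type*} [Group G]

lemma pivot {U : Subgroup G} {k : G} (hk : k ∈ (U : Set G) * (conjS k U : Set G)) :
    k ∈ U := by
  obtain ⟨a, ha, b, hb, hab⟩ := hk
  rw [SetLike.mem_coe, mem_conjS] at hb
  -- k = a * b, so k * b⁻¹ * ... ; we show k = (k * b * k⁻¹) * a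
  have hk' : k = (k * b * k⁻¹) * a := by
    rw [← hab]; group
  rw [hk']
  exact U.mul_mem hb ha

variable [Finite G] {K H : Subgroup G}

lemma exists_normal_intermediate (hHK : H ≤ K)
    (hcp : ∀ x ∈ K, (H : Set G) * (conjS x H : Set G) = (conjS x H : Set G) * (H : Set G))
    (hne : H ≠ K) :
    ∃ U : Subgroup G, H ≤ U ∧ U < K ∧ ∀ x ∈ K, ∀ u ∈ U, x * u * x⁻¹ ∈ U := by
  classical
  set 𝒮 : Set (Subgroup G) :=
    {U | (∃ l : List G, (∀ x ∈ l, x ∈ K) ∧ (U : Set G) = Pl H l) ∧ H ≤ U ∧ U < K} with h𝒮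
  have hH𝒮 : H ∈ 𝒮 := by
    refine ⟨⟨[1], by simp [K.one_mem], ?_⟩, le_refl H, lt_of_le_of_ne hHK hne⟩
    rw [Pl_cons, Pl_nil, mul_one, conjS_one]
  obtain ⟨U, hU𝒮, hmax⟩ :=
    Set.Finite.exists_maximalFor id 𝒮 (Set.toFinite 𝒮) ⟨H, hH𝒮⟩
  obtain ⟨⟨l, hl, hUl⟩, hHU, hUK⟩ := hU𝒮
  refine ⟨U, hHU, hUK, ?_⟩
  -- first show: ∀ k ∈ K, conjS k U ≤ U
  have key : ∀ k ∈ K, conjS k U ≤ U := by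
    intro k hk
    set m : List G := l ++ l.map (· * k) with hm_def
    have hm : ∀ x ∈ m, x ∈ K := by
      intro x hx
      rw [hm_def, List.mem_append] at hx
      rcases hx with hx | hx
      · exact hl x hx
      · obtain ⟨y, hy, rfl⟩ := List.mem_map.1 hx
        exact K.mul_mem (hl y hy) hk
    have hconjU : (conjS k U : Set G) = Pl H (l.map (· * k)) := by
      rw [coe_conjS, hUl, image_Pl hcp k]
    set W : Subgroup G := PlSub hHK hcp m hm with hW_def
    have hWcoe : (W : Set G) = (U : Set G) * (conjS k U : Set G) := by
      rw [hW_def, coe_PlSub, hm_def, Pl_append, hUl, hconjU]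
    have hUW : U ≤ W := by
      intro u hu
      rw [← SetLike.mem_coe, hWcoe]
      exact ⟨u, hu, 1, (conjS k U).one_mem, mul_one u⟩
    have hWK : W ≤ K := fun a ha => Pl_subset hHK hm ha
    by_cases hWKeq : W = K
    · -- then k ∈ U, contradiction with U < K
      exfalso
      have hkW : k ∈ (U : Set G) * (conjS k U : Set G) := by
        rw [← hWcoe, hWKeq]; exact hk
      have hkU : k ∈ U := pivot hkW
      have : (W : Set G) = (U : Set G) := by
        rw [hWcoe, conjS_of_mem hkU, coe_mul_coe]
      exact (ne_of_lt hUK) (SetLike.coe_injective (by rw [← this, hWKeq]))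
    · have hW𝒮 : W ∈ 𝒮 := by
        refine ⟨⟨m, hm, rfl⟩, le_trans hHU hUW, lt_of_le_of_ne hWK hWKeq⟩
      have hUWeq : U = W := le_antisymm hUW (hmax hW𝒮 hUW)
      intro c hc
      have : c ∈ (U : Set G) * (conjS k U : Set G) :=
        ⟨1, U.one_mem, c, hc, one_mul c⟩
      rw [← hWcoe, ← hUWeq] at this
      exact this
  intro x hx u hu
  have hx' : x⁻¹ ∈ K := K.inv_mem hx
  apply key x⁻¹ hx'
  rw [mem_conjS]
  have heq : x⁻¹ * (x * u * x⁻¹) * x⁻¹⁻¹ = u := by group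
  rwa [heq]

end Key


section Chain

variable {G : Type*} [Group G]

lemma isSubnormalIn_refl (H : Subgroup G) : IsSubnormalIn H H :=
  ⟨0, fun _ => H, rfl, rfl, fun i => i.elim0⟩

lemma isSubnormalIn_extend {H U K : Subgroup G} (h : IsSubnormalIn H U)
    (hUK : U ≤ K) (hnorm : ∀ x ∈ K, ∀ u ∈ U, x * u * x⁻¹ ∈ U) :
    IsSubnormalIn H K := by
  obtain ⟨n, s, h0, hlast, hstep⟩ := h
  refine ⟨n + 1, Fin.snoc s K, ?_, ?_, ?_⟩
  · rw [show (0 : Fin (n + 2)) = Fin.castSucc 0 from rfl, Fin.snoc_castSucc]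
    exact h0
  · rw [Fin.snoc_last]
  · intro i
    refine Fin.lastCases ?_ ?_ i
    · rw [Fin.succ_last, Fin.snoc_last, Fin.snoc_castSucc, hlast]
      exact ⟨hUK, hnorm⟩
    · intro j
      rw [Fin.succ_castSucc, Fin.snoc_castSucc, Fin.snoc_castSucc]
      exact hstep j

end Chain

section Main

variable {G : Type*} [Group G] [Finite G]

lemma foguel : ∀ (n : ℕ) (K H : Subgroup G), Nat.card K ≤ n → H ≤ K →
    (∀ x ∈ K, (H : Set G) * (conjS x H : Set G) = (conjS x H : Set G) * (H : Set G)) →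
    IsSubnormalIn H K := by
  intro n
  induction n with
  | zero =>
    intro K H hcard _ _
    exact absurd hcard (by simpa using Nat.card_pos (α := K).ne')
  | succ n ih =>
    intro K H hcard hHK hcp
    by_cases heq : H = K
    · subst heq; exact isSubnormalIn_refl H
    · obtain ⟨U, hHU, hUK, hnorm⟩ := exists_normal_intermediate hHK hcp heq
      have hcardU : Nat.card U < Nat.card K := by
        rw [show Nat.card ↥U = (U : Set G).ncard from Nat.card_coe_set_eq _, show Nat.card ↥K = (K : Set G).ncard from Nat.card_coe_set_eq _]
        exact Set.ncard_lt_ncard (SetLike.coe_ssubset_coe.2 hUK) (Set.toFinite _)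
      have hcpU : ∀ x ∈ U, (H : Set G) * (conjS x H : Set G) = (conjS x H : Set G) * (H : Set G) :=
        fun x hx => hcp x (hUK.le hx)
      exact isSubnormalIn_extend (ih U H (by omega) hHU hcpU) hUK.le hnorm

end Main

theorem subnormal_of_rcp_of_permutes
    {G : Type*} [Group G] [Finite G] (R H : Subgroup G)
    (h1 : IsRCP (R : Set G) H)
    (h2 : (R : Set G) * (H : Set G) = (H : Set G) * (R : Set G)) :
    IsSubnormalIn H (H ⊔ R) := by
  set K := H ⊔ R with hK
  -- the subgroup with carrier ↑H * ↑R
  have hmulself : ((H : Set G) * (R : Set G)) * ((H : Set G) * (R : Set G))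
      = (H : Set G) * (R : Set G) := by
    calc ((H : Set G) * R) * ((H : Set G) * R)
        = (H : Set G) * (((R : Set G) * H) * R) := by simp only [mul_assoc]
      _ = (H : Set G) * (((H : Set G) * R) * R) := by rw [h2]
      _ = ((H : Set G) * H) * ((R : Set G) * R) := by simp only [mul_assoc]
      _ = (H : Set G) * R := by rw [coe_mul_coe, coe_mul_coe]
  let S : Subgroup G :=
    { carrier := (H : Set G) * (R : Set G)
      one_mem' := ⟨1, H.one_mem, 1, R.one_mem, by simp⟩
      mul_mem' := fun {a b} ha hb => by
        have : a * b ∈ ((H : Set G) * R) * ((H : Set G) * R) := Set.mul_mem_mul ha hb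
        rwa [hmulself] at this
      inv_mem' := fun {a} ha => by
        show a⁻¹ ∈ (H : Set G) * R
        have h3 : a⁻¹ ∈ (((H : Set G) * R))⁻¹ := Set.inv_mem_inv.2 ha
        rwa [mul_inv_rev, inv_coe_set, inv_coe_set, h2] at h3 }
  have hcoeK : (K : Set G) = (H : Set G) * (R : Set G) := by
    apply le_antisymm
    · have hle : K ≤ S := sup_le
        (fun h hh => ⟨h, hh, 1, R.one_mem, mul_one h⟩)
        (fun r hr => ⟨1, H.one_mem, r, hr, one_mul r⟩)
      exact fun a ha => hle ha
    · rintro a ⟨h, hh, r, hr, rfl⟩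
      exact K.mul_mem (le_sup_left (a := H) (b := R) hh) (le_sup_right (a := H) (b := R) hr)
  have hcp : ∀ x ∈ K, (H : Set G) * (conjS x H : Set G) = (conjS x H : Set G) * (H : Set G) := by
    intro x hx
    have hx' : x ∈ (H : Set G) * (R : Set G) := by rw [← hcoeK]; exact hx
    obtain ⟨h, hh, r, hr, rfl⟩ := hx'
    rw [← conjS_conjS, conjS_of_mem hh]
    exact h1 r hr
  exact foguel (Nat.card K) K H le_rfl le_sup_left hcp
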